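/- Let ρ ≤ λ be infinite cardinals. There exists f : λ → ρ with ds(f) ≥ m(ρ, λ); consequently DS(ρ, λ) ≥ m(ρ, λ). -/

import Mathlib

open Cardinal

noncomputable section

/-- The covering number `cov(ρ₁, ρ₂, ρ₃, ρ₄)`: least cardinality of `X ⊆ P_{ρ₂}(ρ₁)`
such that every `b ∈ P_{ρ₃}(ρ₁)` is covered by the union of fewer than `ρ₄` members of `X`. -/
def cov (r1 r2 r3 r4 : Cardinal) : Cardinal :=
  sInf { c | ∃ X : Set (Set r1.out),
    (∀ x ∈ X, #x < r2) ∧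
    (∀ b : Set r1.out, #b < r3 → ∃ Q : Set (Set r1.out), Q ⊆ X ∧ #Q < r4 ∧ b ⊆ ⋃₀ Q) ∧
    #X = c }

/-- The meeting number `m(ρ, λ)`. -/
def meet (ρ lam : Cardinal) : Cardinal :=
  sInf { c | ∃ Q : Set (Set lam.out),
    (∀ q ∈ Q, #q = ρ) ∧
    (∀ b : Set lam.out, #b = ρ → ∃ q ∈ Q, #(↥(b ∩ q)) = ρ) ∧
    #Q = c }

/-- The density number `d(ρ, λ)`. -/
def dens (ρ lam : Cardinal) : Cardinal :=
  sInf { c | ∃ Q : Set (Set lam.out),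
    (∀ q ∈ Q, #q = ρ) ∧
    (∀ b : Set lam.out, #b = ρ → ∃ q ∈ Q, q ⊆ b) ∧
    #Q = c }

/-- `ds(f)` for `f : λ → ρ`. -/
def ds (ρ lam : Cardinal) (f : lam.out → ρ.out) : Cardinal :=
  sInf { c | ∃ Z : Set (Set lam.out),
    (∀ z ∈ Z, #z = ρ) ∧
    (∀ B : Set lam.out, (∀ α : ρ.out, #(↥(B ∩ f ⁻¹' {α})) = lam) →
      ∃ z ∈ Z, #(↥(f '' (z ∩ B))) = ρ) ∧
    #Z = c }

/-- The Džamonja–Shelah number `DS(ρ, λ) = sup { ds(f) : f : λ → ρ }`. -/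
def DS (ρ lam : Cardinal) : Cardinal := ⨆ f : lam.out → ρ.out, ds ρ lam f

/-- Cofinality of a cardinal. -/
def cf (c : Cardinal) : Cardinal := c.ord.cof

/-- `u(σ, λ) = cov(λ, σ, σ, ω)`. -/
def u (σ lam : Cardinal) : Cardinal := cov lam σ σ ℵ₀

/-- The `o`-th iterated cardinal successor of `c`. -/
def succIter (c : Cardinal) (o : Ordinal) : Cardinal :=
  Cardinal.preAleph (Cardinal.preAleph.symm c + o)


theorem stmt2 (ρ lam : Cardinal) (hρ : ℵ₀ ≤ ρ) (hle : ρ ≤ lam) :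
    (∃ f : lam.out → ρ.out, meet ρ lam ≤ ds ρ lam f) ∧ meet ρ lam ≤ DS ρ lam := by
  classical
  have hlam : ℵ₀ ≤ lam := hρ.trans hle
  obtain ⟨j⟩ : Nonempty (ρ.out × lam.out ≃ lam.out) := by
    rw [← Cardinal.eq]
    simp only [Cardinal.mk_prod, Cardinal.lift_id, Cardinal.mk_out]
    rw [Cardinal.mul_eq_max hρ hlam, max_eq_right hle]
  obtain ⟨k⟩ : Nonempty (lam.out ≃ lam.out × lam.out) := by
    rw [← Cardinal.eq]
    simp only [Cardinal.mk_prod, Cardinal.lift_id, Cardinal.mk_out]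
    rw [Cardinal.mul_eq_self hlam]
  set f : lam.out → ρ.out := fun x => (j.symm x).1 with hfdef
  set g : lam.out → lam.out := fun x => (k ((j.symm x).2)).1 with hgdef
  -- the defining set of ds f is nonempty
  have hDne : {c | ∃ Z : Set (Set lam.out),
      (∀ z ∈ Z, #z = ρ) ∧
      (∀ B : Set lam.out, (∀ α : ρ.out, #(↥(B ∩ f ⁻¹' {α})) = lam) →
        ∃ z ∈ Z, #(↥(f '' (z ∩ B))) = ρ) ∧
      #Z = c}.Nonempty := by
    refine ⟨_, {z : Set lam.out | #z = ρ}, fun z hz => hz, ?_, rfl⟩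
    intro B hB
    have hne : ∀ α : ρ.out, Nonempty ↥(B ∩ f ⁻¹' {α}) := by
      intro α
      rw [← Cardinal.mk_ne_zero_iff, hB α]
      exact (Cardinal.aleph0_pos.trans_le hlam).ne'
    set t : ∀ α : ρ.out, ↥(B ∩ f ⁻¹' {α}) := fun α => (hne α).some with htdef
    have htB : ∀ α, (t α : lam.out) ∈ B := fun α => (t α).2.1
    have htf : ∀ α, f (t α) = α := fun α => (t α).2.2
    have hinj : Function.Injective (fun α => ((t α : lam.out))) := by
      intro a a' h
      have := congrArg f h
      simpa [htf] using this
    refine ⟨Set.range (fun α => ((t α : lam.out))), ?_, ?_⟩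
    · rw [Set.mem_setOf_eq, Cardinal.mk_range_eq _ hinj, Cardinal.mk_out]
    · have h1 : Set.range (fun α => ((t α : lam.out))) ∩ B
          = Set.range (fun α => ((t α : lam.out))) :=
        Set.inter_eq_left.mpr (Set.range_subset_iff.mpr htB)
      rw [h1, ← Set.range_comp]
      have h2 : (f ∘ fun α => ((t α : lam.out))) = id := funext htf
      rw [h2, Set.range_id, Cardinal.mk_univ, Cardinal.mk_out]
  obtain ⟨Z, hZ1, hZ2, hZ3⟩ : ∃ Z : Set (Set lam.out),
      (∀ z ∈ Z, #z = ρ) ∧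
      (∀ B : Set lam.out, (∀ α : ρ.out, #(↥(B ∩ f ⁻¹' {α})) = lam) →
        ∃ z ∈ Z, #(↥(f '' (z ∩ B))) = ρ) ∧
      #Z = ds ρ lam f := by
    unfold ds; exact csInf_mem hDne
  set Z' : Set (Set lam.out) := {z ∈ Z | #(↥(g '' z)) = ρ} with hZ'def
  set Q : Set (Set lam.out) := (fun z => g '' z) '' Z' with hQdef
  have hQ1 : ∀ q ∈ Q, #q = ρ := by
    rintro q ⟨z, ⟨hzZ, hzρ⟩, rfl⟩
    exact hzρ
  have hQ2 : ∀ b : Set lam.out, #b = ρ → ∃ q ∈ Q, #(↥(b ∩ q)) = ρ := by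
    intro b hb
    obtain ⟨e⟩ : Nonempty (ρ.out ≃ ↥b) := by
      rw [← Cardinal.eq, Cardinal.mk_out, hb]
    set B : Set lam.out := {x | g x = ↑(e (f x))} with hBdef
    have hfib : ∀ α : ρ.out, #(↥(B ∩ f ⁻¹' {α})) = lam := by
      intro α
      have hFmem : ∀ x : lam.out, j (α, k.symm (↑(e α), x)) ∈ B ∩ f ⁻¹' {α} := by
        intro x
        constructor
        · show g _ = _
          simp [hgdef, hfdef, Equiv.symm_apply_apply, Equiv.apply_symm_apply]
        · show f _ = α
          simp [hfdef, Equiv.symm_apply_apply]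
      set F : lam.out → ↥(B ∩ f ⁻¹' {α}) := fun x => ⟨_, hFmem x⟩ with hFdef
      have hFinj : Function.Injective F := by
        intro x y hxy
        have h1 : j (α, k.symm (↑(e α), x)) = j (α, k.symm (↑(e α), y)) :=
          congrArg Subtype.val hxy
        have h2 := j.injective h1
        have h3 : k.symm (↑(e α), x) = k.symm (↑(e α), y) := congrArg Prod.snd h2
        have h4 := k.symm.injective h3
        exact congrArg Prod.snd h4
      refine le_antisymm ?_ ?_
      · calc #(↥(B ∩ f ⁻¹' {α})) ≤ #lam.out := Cardinal.mk_set_le _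
          _ = lam := Cardinal.mk_out lam
      · calc lam = #lam.out := (Cardinal.mk_out lam).symm
          _ ≤ #(↥(B ∩ f ⁻¹' {α})) := Cardinal.mk_le_of_injective hFinj
    obtain ⟨z, hzZ, hz⟩ := hZ2 B hfib
    have himg : g '' (z ∩ B) = (fun α : ρ.out => (↑(e α) : lam.out)) '' (f '' (z ∩ B)) := by
      rw [Set.image_image]
      exact Set.image_congr fun x hx => hx.2
    have hcard : #(↥(g '' (z ∩ B))) = ρ := by
      rw [himg, Cardinal.mk_image_eq (f := fun α : ρ.out => (↑(e α) : lam.out))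
        (fun a a' h => e.injective (Subtype.coe_injective h)), hz]
    have hsub1 : g '' (z ∩ B) ⊆ g '' z := Set.image_mono Set.inter_subset_left
    have hsub2 : g '' (z ∩ B) ⊆ b := by
      rw [himg]
      rintro _ ⟨y, _, rfl⟩
      exact (e y).2
    have hgz : #(↥(g '' z)) = ρ := by
      refine le_antisymm ?_ ?_
      · calc #(↥(g '' z)) ≤ #z := Cardinal.mk_image_le
          _ = ρ := hZ1 z hzZ
      · calc ρ = #(↥(g '' (z ∩ B))) := hcard.symm
          _ ≤ #(↥(g '' z)) := Cardinal.mk_le_mk_of_subset hsub1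
    refine ⟨g '' z, ⟨z, ⟨hzZ, hgz⟩, rfl⟩, ?_⟩
    refine le_antisymm ?_ ?_
    · calc #(↥(b ∩ g '' z)) ≤ #b := Cardinal.mk_le_mk_of_subset Set.inter_subset_left
        _ = ρ := hb
    · calc ρ = #(↥(g '' (z ∩ B))) := hcard.symm
        _ ≤ #(↥(b ∩ g '' z)) := Cardinal.mk_le_mk_of_subset
            (Set.subset_inter hsub2 hsub1)
  have hmain : meet ρ lam ≤ ds ρ lam f := by
    have hmem : #Q ∈ { c | ∃ Q : Set (Set lam.out),
        (∀ q ∈ Q, #q = ρ) ∧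
        (∀ b : Set lam.out, #b = ρ → ∃ q ∈ Q, #(↥(b ∩ q)) = ρ) ∧
        #Q = c } := ⟨Q, hQ1, hQ2, rfl⟩
    have h1 : meet ρ lam ≤ #Q := csInf_le' hmem
    refine h1.trans ?_
    calc #Q ≤ #Z' := Cardinal.mk_image_le
      _ ≤ #Z := Cardinal.mk_le_mk_of_subset (Set.sep_subset _ _)
      _ = ds ρ lam f := hZ3
  exact ⟨⟨f, hmain⟩, hmain.trans (le_ciSup (Cardinal.bddAbove_range _) f)⟩
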